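/- In the setup below, suppose h² ≠ 0 and let γ(α) and α_max be defined from h². Define φ_N := inf{ ‖w‖₁ : w ∈ ℝ^d, (⟨w_S^⊥, h¹⟩ + ⟨w_{S^c}^⊥, h²⟩)²/n ≥ f_n(⟨w, w*⟩, ‖w^⊥‖₂) and ⟨w_S^⊥, h¹⟩ + ⟨w_{S^c}^⊥, h²⟩ ≥ 0 }. Then, for every realization of (g¹, g², h¹, h²) with h² ≠ 0: φ_N ≤ inf{ |ν|·‖w*‖₁ + b·α : ν ∈ ℝ, b ≥ 0, α ∈ [1, α_max], (1/n)·b²·‖h²‖_∞² ≥ f_n(ν, b·‖γ(α)‖₂) }, with the convention that the infimum over the empty set is +∞ (here b·α = b·‖γ(α)‖₁ since γ(α) is nonnegative with coordinate sum α). -/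

import Mathlib

open MeasureTheory ProbabilityTheory

/-- The sign function: `1` if `t ≥ 0` and `-1` otherwise. -/
noncomputable def sgn (t : ℝ) : ℝ := if 0 ≤ t then 1 else -1

/-- The Euclidean inner product on `Fin k → ℝ`. -/
def ip {k : ℕ} (a b : Fin k → ℝ) : ℝ := ∑ i, a i * b i

/-- The ℓ1 norm on `Fin k → ℝ`. -/
noncomputable def l1 {k : ℕ} (a : Fin k → ℝ) : ℝ := ∑ i, |a i|

/-- The ℓ2 norm on `Fin k → ℝ`. -/
noncomputable def l2 {k : ℕ} (a : Fin k → ℝ) : ℝ := Real.sqrt (∑ i, (a i) ^ 2)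

/-- The ℓ∞ norm on `Fin k → ℝ` (as a supremum over coordinates). -/
noncomputable def linf {k : ℕ} (a : Fin k → ℝ) : ℝ := ⨆ i, |a i|

/-- The empirical auxiliary function
`f_n(ν, η) = (1/n) Σ_i (1 - ξ_i ν |g¹_i| - g²_i η)₊²`. -/
noncomputable def fn (n : ℕ) (ξ g1 g2 : Fin n → ℝ) (ν η : ℝ) : ℝ :=
  (1 / (n : ℝ)) * ∑ i, (max (1 - ξ i * ν * |g1 i| - g2 i * η) 0) ^ 2

/-- The `k`-fold product of the standard Gaussian measure `N(0,1)` on `ℝ`. -/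
noncomputable def stdGauss (k : ℕ) : Measure (Fin k → ℝ) :=
  Measure.pi fun _ : Fin k => gaussianReal 0 1

/-- The joint law of the independent auxiliary Gaussian vectors `(g¹, g², h¹, h²)`. -/
noncomputable def auxGauss (n s r : ℕ) :
    Measure ((Fin n → ℝ) × (Fin n → ℝ) × (Fin s → ℝ) × (Fin r → ℝ)) :=
  (stdGauss n).prod ((stdGauss n).prod ((stdGauss s).prod (stdGauss r)))

/-- The constraint set
`K_α = {w : ⟨w, |h|⟩ ≥ ‖h‖_∞, w_j ≥ 0 for all j, Σ_j w_j = α}`. -/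
noncomputable def Kset (m : ℕ) (h : Fin m → ℝ) (α : ℝ) : Set (Fin m → ℝ) :=
  {w | linf h ≤ (∑ j, w j * |h j|) ∧ (∀ j, 0 ≤ w j) ∧ (∑ j, w j) = α}

/-- `γ : α ↦ γ(α)` is the path of minimizers: for every `α ≥ 1`, `γ(α)` minimizes
`w ↦ ‖w‖₂²` over `K_α` (this minimizer is unique, so this characterizes `γ`). -/
def IsGammaPath (m : ℕ) (h : Fin m → ℝ) (γ : ℝ → Fin m → ℝ) : Prop :=
  ∀ α : ℝ, 1 ≤ α → γ α ∈ Kset m h α ∧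
    ∀ w ∈ Kset m h α, (∑ j, (γ α j) ^ 2) ≤ ∑ j, (w j) ^ 2

/-- `α_max := m ‖h‖_∞ / ‖h‖₁`. -/
noncomputable def alphaMax (m : ℕ) (h : Fin m → ℝ) : ℝ := m * linf h / l1 h

lemma sum_fin_split (d s : ℕ) (hsd : s ≤ d) (f : Fin d → ℝ) :
    ∑ i, f i = (∑ j : Fin s, f ⟨j.1, lt_of_lt_of_le j.2 hsd⟩) +
      ∑ j : Fin (d - s), f ⟨s + j.1, by omega⟩ := by
  classical
  set F : ℕ → ℝ := fun i => if h : i < d then f ⟨i, h⟩ else 0 with hF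
  have h1 : ∑ i : Fin d, f i = ∑ i ∈ Finset.range d, F i := by
    rw [← Fin.sum_univ_eq_sum_range F d]
    exact Finset.sum_congr rfl fun i _ => by simp only [hF]; rw [dif_pos i.2]
  have h2 : ∑ i ∈ Finset.range d, F i =
      ∑ i ∈ Finset.range s, F i + ∑ i ∈ Finset.Ico s d, F i := by
    rw [Finset.range_eq_Ico, ← Finset.sum_Ico_consecutive _ (Nat.zero_le s) hsd, Finset.range_eq_Ico]
  have h3 : ∑ i ∈ Finset.Ico s d, F i = ∑ i ∈ Finset.range (d - s), F (s + i) := by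
    rw [Finset.sum_Ico_eq_sum_range]
  have h4 : ∑ j : Fin s, f ⟨j.1, lt_of_lt_of_le j.2 hsd⟩ = ∑ i ∈ Finset.range s, F i := by
    rw [← Fin.sum_univ_eq_sum_range F s]
    exact Finset.sum_congr rfl fun i _ => by
      simp only [hF]; rw [dif_pos (lt_of_lt_of_le i.2 hsd)]
  have h5 : ∑ j : Fin (d - s), f ⟨s + j.1, by omega⟩ =
      ∑ i ∈ Finset.range (d - s), F (s + i) := by
    rw [← Fin.sum_univ_eq_sum_range (fun i => F (s + i)) (d - s)]
    exact Finset.sum_congr rfl fun i _ => by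
      have : s + i.1 < d := by have := i.2; omega
      simp only [hF]; rw [dif_pos this]
  rw [h1, h2, h3, h4, h5]

lemma sgn_mul_self (t : ℝ) : sgn t * t = |t| := by
  unfold sgn
  by_cases h : 0 ≤ t
  · rw [if_pos h, one_mul, abs_of_nonneg h]
  · rw [if_neg h, abs_of_neg (lt_of_not_ge h)]; ring

lemma abs_sgn (t : ℝ) : |sgn t| = 1 := by
  unfold sgn; by_cases h : 0 ≤ t <;> simp [h]

lemma sq_sgn (t : ℝ) : sgn t ^ 2 = 1 := by
  unfold sgn; by_cases h : 0 ≤ t <;> simp [h]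

theorem stmt11 (n d s : ℕ) (hn : 1 ≤ n) (hd : 2 ≤ d) (hs1 : 1 ≤ s) (hs2 : s ≤ d - 1)
    (wstar : Fin d → ℝ) (hwstar : l2 wstar = 1)
    (hsupp : ∀ i : Fin d, s ≤ i.1 → wstar i = 0)
    (ξ : Fin n → ℝ) (hξ : ∀ i, ξ i = 1 ∨ ξ i = -1)
    (g1 g2 : Fin n → ℝ) (h1 : Fin s → ℝ) (h2 : Fin (d - s) → ℝ) (hh2 : h2 ≠ 0)
    (γ : ℝ → Fin (d - s) → ℝ) (hγ : IsGammaPath (d - s) h2 γ) :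
    sInf {r : EReal | ∃ w : Fin d → ℝ,
        (fn n ξ g1 g2 (ip w wstar)
            (l2 (fun i => w i - ip w wstar * wstar i)) ≤
          ((∑ j : Fin s, (w ⟨j.1, by have := j.2; omega⟩ -
                ip w wstar * wstar ⟨j.1, by have := j.2; omega⟩) * h1 j) +
           (∑ j : Fin (d - s), (w ⟨s + j.1, by have := j.2; omega⟩ -
                ip w wstar * wstar ⟨s + j.1, by have := j.2; omega⟩) * h2 j)) ^ 2
            / (n : ℝ)) ∧
        (0 ≤ (∑ j : Fin s, (w ⟨j.1, by have := j.2; omega⟩ -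
                ip w wstar * wstar ⟨j.1, by have := j.2; omega⟩) * h1 j) +
             (∑ j : Fin (d - s), (w ⟨s + j.1, by have := j.2; omega⟩ -
                ip w wstar * wstar ⟨s + j.1, by have := j.2; omega⟩) * h2 j)) ∧
        r = (l1 w : EReal)}
    ≤ sInf {r : EReal | ∃ ν b α : ℝ, 0 ≤ b ∧ 1 ≤ α ∧ α ≤ alphaMax (d - s) h2 ∧
        fn n ξ g1 g2 ν (b * l2 (γ α)) ≤ 1 / (n : ℝ) * b ^ 2 * (linf h2) ^ 2 ∧
        r = ((|ν| * l1 wstar + b * α : ℝ) : EReal)} := by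
  apply sInf_le_sInf
  rintro r ⟨ν, b, α, hb, hα1, hα2, hfn, rfl⟩
  have hsd : s < d := by omega
  obtain ⟨⟨hKinf, hKpos, hKsum⟩, -⟩ := hγ α hα1
  -- the candidate vector
  set w : Fin d → ℝ := fun i =>
    if h : i.1 < s then ν * wstar i
    else b * γ α ⟨i.1 - s, by have := i.2; omega⟩ * sgn (h2 ⟨i.1 - s, by have := i.2; omega⟩)
    with hwdef
  have hwlt : ∀ (i : Fin d), i.1 < s → w i = ν * wstar i := by
    intro i h; simp only [hwdef]; rw [dif_pos h]
  have hwge : ∀ (j : Fin (d - s)), w ⟨s + j.1, by have := j.2; omega⟩ =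
      b * γ α j * sgn (h2 j) := by
    intro j
    simp only [hwdef]
    rw [dif_neg (by omega : ¬ (s + j.1 < s))]
    have hje : (⟨s + j.1 - s, by have := j.2; omega⟩ : Fin (d - s)) = j := by
      apply Fin.ext; simp
    rw [hje]
  have hsum2 : ∑ i : Fin d, wstar i ^ 2 = 1 := by
    have h := hwstar
    unfold l2 at h
    have h0 : 0 ≤ ∑ i : Fin d, wstar i ^ 2 :=
      Finset.sum_nonneg fun i _ => sq_nonneg _
    nlinarith [Real.sq_sqrt h0]
  have hip : ip w wstar = ν := by
    unfold ip
    have hcongr : ∀ i : Fin d, w i * wstar i = ν * wstar i ^ 2 := by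
      intro i
      by_cases h : i.1 < s
      · rw [hwlt i h]; ring
      · rw [hsupp i (le_of_not_gt h)]; ring
    rw [Finset.sum_congr rfl fun i _ => hcongr i, ← Finset.mul_sum, hsum2, mul_one]
  set T : ℝ := ∑ j : Fin (d - s), γ α j * |h2 j| with hT
  have hlinfT : linf h2 ≤ T := hKinf
  have hlinf0 : 0 ≤ linf h2 := by
    unfold linf
    have hbd : BddAbove (Set.range fun i : Fin (d - s) => |h2 i|) :=
      Set.Finite.bddAbove (Set.finite_range _)
    exact le_trans (abs_nonneg (h2 ⟨0, by omega⟩)) (le_ciSup hbd ⟨0, by omega⟩)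
  have hT0 : 0 ≤ T := le_trans hlinf0 hlinfT
  have hnpos : (0:ℝ) < n := by exact_mod_cast hn
  -- the two sums appearing in the constraints
  have hS1 : (∑ j : Fin s, (w ⟨j.1, by have := j.2; omega⟩ -
      ip w wstar * wstar ⟨j.1, by have := j.2; omega⟩) * h1 j) = 0 := by
    apply Finset.sum_eq_zero
    intro j _
    rw [hip, hwlt ⟨j.1, by have := j.2; omega⟩ j.2]
    ring
  have hS2 : (∑ j : Fin (d - s), (w ⟨s + j.1, by have := j.2; omega⟩ -
      ip w wstar * wstar ⟨s + j.1, by have := j.2; omega⟩) * h2 j) = b * T := by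
    rw [hT, Finset.mul_sum]
    apply Finset.sum_congr rfl
    intro j _
    rw [hip, hwge j, hsupp ⟨s + j.1, by have := j.2; omega⟩ (by simp)]
    have hsm : sgn (h2 j) * h2 j = |h2 j| := sgn_mul_self _
    linear_combination b * γ α j * hsm
  have hl2perp : l2 (fun i => w i - ip w wstar * wstar i) = b * l2 (γ α) := by
    unfold l2
    rw [hip]
    have hsplit := sum_fin_split d s (le_of_lt hsd)
      (fun i => (w i - ν * wstar i) ^ 2)
    have hz : (∑ j : Fin s, ((fun i => (w i - ν * wstar i) ^ 2)
        ⟨j.1, lt_of_lt_of_le j.2 (le_of_lt hsd)⟩)) = 0 := by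
      apply Finset.sum_eq_zero
      intro j _
      simp only
      rw [hwlt ⟨j.1, lt_of_lt_of_le j.2 (le_of_lt hsd)⟩ j.2]
      ring
    have hrest : (∑ j : Fin (d - s), ((fun i => (w i - ν * wstar i) ^ 2)
        ⟨s + j.1, by have := j.2; omega⟩)) = b ^ 2 * ∑ j, (γ α j) ^ 2 := by
      rw [Finset.mul_sum]
      apply Finset.sum_congr rfl
      intro j _
      simp only
      rw [hwge j, hsupp ⟨s + j.1, by have := j.2; omega⟩ (by simp)]
      have hsq := sq_sgn (h2 j)
      linear_combination b ^ 2 * γ α j ^ 2 * hsq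
    rw [show (∑ i : Fin d, (w i - ν * wstar i) ^ 2) = b ^ 2 * ∑ j, (γ α j) ^ 2 by
        rw [hsplit, hz, hrest]; ring]
    rw [Real.sqrt_mul (sq_nonneg b), Real.sqrt_sq hb]
  have hl1 : l1 w = |ν| * l1 wstar + b * α := by
    unfold l1
    rw [sum_fin_split d s (le_of_lt hsd) (fun i => |w i|),
      sum_fin_split d s (le_of_lt hsd) (fun i => |wstar i|)]
    have e1 : (∑ j : Fin s, |w ⟨j.1, lt_of_lt_of_le j.2 (le_of_lt hsd)⟩|) =
        |ν| * ∑ j : Fin s, |wstar ⟨j.1, lt_of_lt_of_le j.2 (le_of_lt hsd)⟩| := by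
      rw [Finset.mul_sum]
      exact Finset.sum_congr rfl fun j _ => by
        rw [hwlt ⟨j.1, lt_of_lt_of_le j.2 (le_of_lt hsd)⟩ j.2, abs_mul]
    have e2 : (∑ j : Fin (d - s), |w ⟨s + j.1, by have := j.2; omega⟩|) = b * α := by
      rw [← hKsum, Finset.mul_sum]
      exact Finset.sum_congr rfl fun j _ => by
        rw [hwge j, abs_mul, abs_mul, abs_sgn, abs_of_nonneg hb,
          abs_of_nonneg (hKpos j), mul_one]
    have e3 : (∑ j : Fin (d - s), |wstar ⟨s + j.1, by have := j.2; omega⟩|) = 0 := by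
      apply Finset.sum_eq_zero
      intro j _
      rw [hsupp ⟨s + j.1, by have := j.2; omega⟩ (by simp), abs_zero]
    rw [e1, e2, e3]
    ring
  refine ⟨w, ?_, ?_, ?_⟩
  · rw [hl2perp, hS1, hS2, hip]
    calc fn n ξ g1 g2 ν (b * l2 (γ α)) ≤ 1 / (n : ℝ) * b ^ 2 * (linf h2) ^ 2 := hfn
      _ = b ^ 2 * (linf h2) ^ 2 / n := by ring
      _ ≤ b ^ 2 * T ^ 2 / n := by
          have hle : b ^ 2 * (linf h2) ^ 2 ≤ b ^ 2 * T ^ 2 := by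
            nlinarith [sq_nonneg b, mul_self_le_mul_self hlinf0 hlinfT]
          gcongr
      _ = (0 + b * T) ^ 2 / n := by ring
  · rw [hS1, hS2]
    have : 0 ≤ b * T := mul_nonneg hb hT0
    linarith
  · rw [hl1]
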